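/- Let x_1,...,x_n be points in [0,1]^d and m ≥ 2 an integer. Then the number of monotone labelings with m labels satisfies L(m, x_1,...,x_n) ≤ L(2, x_1,...,x_n)^{m-1}. -/
import Mathlib


/-- `L m x` is the number of monotone labelings of the points `x 1, ..., x n ∈ ℝ^d`
with `m` labels: functions `φ` with `φ i ≤ φ j` whenever `x i ⪯ x j` coordinate-wise. -/
noncomputable def monotoneLabelingCount (d n m : ℕ) (x : Fin n → Fin d → ℝ) : ℕ :=
  Nat.card {φ : Fin n → Fin m // ∀ i j, (∀ k, x i k ≤ x j k) → φ i ≤ φ j}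

/-- For points `x_1,...,x_n ∈ [0,1]^d` and `m ≥ 2`, the number of monotone labelings
with `m` labels satisfies `L(m) ≤ L(2)^{m-1}`. -/
theorem stmt6 (d n m : ℕ) (hm : 2 ≤ m) (x : Fin n → Fin d → ℝ)
    (hx : ∀ i k, x i k ∈ Set.Icc (0 : ℝ) 1) :
    monotoneLabelingCount d n m x ≤ (monotoneLabelingCount d n 2 x) ^ (m - 1) := by
  classical
  unfold monotoneLabelingCount
  set Sm := {φ : Fin n → Fin m // ∀ i j, (∀ k, x i k ≤ x j k) → φ i ≤ φ j}
  set S2 := {φ : Fin n → Fin 2 // ∀ i j, (∀ k, x i k ≤ x j k) → φ i ≤ φ j}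
  let f : Sm → (Fin (m - 1) → S2) := fun φ t =>
    ⟨fun i => if (t : ℕ) + 1 ≤ (φ.1 i : ℕ) then 1 else 0, by
      intro i j hij
      have h := φ.2 i j hij
      by_cases h1 : (t : ℕ) + 1 ≤ (φ.1 i : ℕ)
      · have h2 : (t : ℕ) + 1 ≤ (φ.1 j : ℕ) := le_trans h1 h
        simp [h1, h2]
      · simp only [h1, if_false]
        exact Fin.zero_le _⟩
  have hf : Function.Injective f := by
    intro φ ψ hfe
    ext i
    by_contra hne
    have hne' : (φ.1 i : ℕ) ≠ (ψ.1 i : ℕ) := fun h => hne (by simp [Fin.ext_iff, h])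
    -- wlog via min
    rcases lt_or_gt_of_ne hne' with hlt | hlt
    · have ht : (φ.1 i : ℕ) < m - 1 := by
        have := (ψ.1 i).isLt; omega
      have := congrFun (congrFun (congrArg (fun g => fun t => (g t).1) hfe) ⟨(φ.1 i : ℕ), ht⟩) i
      simp only [f] at this
      have h1 : ¬ ((φ.1 i : ℕ) + 1 ≤ (φ.1 i : ℕ)) := by omega
      have h2 : (φ.1 i : ℕ) + 1 ≤ (ψ.1 i : ℕ) := hlt
      rw [if_neg h1, if_pos h2] at this
      exact absurd this (by decide)
    · have ht : (ψ.1 i : ℕ) < m - 1 := by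
        have := (φ.1 i).isLt; omega
      have := congrFun (congrFun (congrArg (fun g => fun t => (g t).1) hfe) ⟨(ψ.1 i : ℕ), ht⟩) i
      simp only [f] at this
      have h1 : (ψ.1 i : ℕ) + 1 ≤ (φ.1 i : ℕ) := hlt
      have h2 : ¬ ((ψ.1 i : ℕ) + 1 ≤ (ψ.1 i : ℕ)) := by omega
      rw [if_pos h1, if_neg h2] at this
      exact absurd this (by decide)
  calc Nat.card Sm ≤ Nat.card (Fin (m - 1) → S2) := Nat.card_le_card_of_injective f hf
    _ = Nat.card S2 ^ (m - 1) := by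
        haveI : Finite S2 := Subtype.finite
        rw [Nat.card_fun]
        simp
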